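/- Let n ≥ 2. (1) The subspace D_n = K∂_1 ⊕ ⋯ ⊕ K∂_n of u_n satisfies Cen_{u_n}(D_n) = D_n; hence D_n is a maximal abelian Lie subalgebra of u_n. (2) The ideal P_{n-1}∂_n of u_n satisfies Cen_{u_n}(P_{n-1}∂_n) = P_{n-1}∂_n; hence P_{n-1}∂_n is a maximal abelian Lie subalgebra of u_n. -/

import Mathlib

open MvPolynomial

noncomputable section


/-- If a derivation of `MvPolynomial σ K` maps every generator `X j`, `j ∈ s`, into the
subalgebra `supported K s` of polynomials supported on `s`, then it maps the whole of
`supported K s` into itself. -/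
theorem Derivation.mem_supported_of_forall_mem
    {K : Type*} [CommRing K] {σ : Type*} (s : Set σ)
    (D : Derivation K (MvPolynomial σ K) (MvPolynomial σ K))
    (h : ∀ j ∈ s, D (X j) ∈ supported K s)
    {p : MvPolynomial σ K} (hp : p ∈ supported K s) : D p ∈ supported K s := by
  rw [supported_eq_adjoin_X] at hp
  induction hp using Algebra.adjoin_induction with
  | mem x hx =>
    obtain ⟨j, hj, rfl⟩ := hx
    exact h j hj
  | algebraMap r =>
    rw [Derivation.map_algebraMap]
    exact zero_mem _
  | add x y hx hy ihx ihy =>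
    rw [map_add]
    exact add_mem ihx ihy
  | mul x y hx hy ihx ihy =>
    rw [Derivation.leibniz, smul_eq_mul, smul_eq_mul]
    rw [← supported_eq_adjoin_X] at hx hy
    exact add_mem (mul_mem hx ihy) (mul_mem hy ihx)

/-- If a derivation of `MvPolynomial σ K` kills every generator `X j`, `j ∈ s`, then it
kills the whole subalgebra `supported K s`. -/
theorem Derivation.eq_zero_of_forall_eq_zero
    {K : Type*} [CommRing K] {σ : Type*} (s : Set σ)
    (D : Derivation K (MvPolynomial σ K) (MvPolynomial σ K))
    (h : ∀ j ∈ s, D (X j) = 0)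
    {p : MvPolynomial σ K} (hp : p ∈ supported K s) : D p = 0 := by
  rw [supported_eq_adjoin_X] at hp
  induction hp using Algebra.adjoin_induction with
  | mem x hx =>
    obtain ⟨j, hj, rfl⟩ := hx
    exact h j hj
  | algebraMap r =>
    rw [Derivation.map_algebraMap]
  | add x y hx hy ihx ihy =>
    rw [map_add, ihx, ihy, add_zero]
  | mul x y hx hy ihx ihy =>
    rw [Derivation.leibniz, ihx, ihy, smul_zero, smul_zero, add_zero]

/-- The defining condition for the Lie algebra `u_n = K∂₁ ⊕ P₁∂₂ ⊕ ⋯ ⊕ P_{n-1}∂ₙ` of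
triangular polynomial derivations of `P_n = K[x₁,…,xₙ]` (variables indexed by `Fin n`,
zero-based): a derivation `D` of `P_n` is triangular iff, for every `i`, the polynomial
`D (X i)` only involves the variables `X j` with `j < i` (so the coefficient of `∂_i`
lies in `P_{i-1}`, where `P₀ = K`). -/
def triSet (K : Type*) [Field K] (n : ℕ) :
    Set (Derivation K (MvPolynomial (Fin n) K) (MvPolynomial (Fin n) K)) :=
  {D | ∀ i : Fin n, D (X i) ∈ supported K {j : Fin n | (j : ℕ) < (i : ℕ)}}

theorem supported_upward {K : Type*} [Field K] {n : ℕ}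
    (p : MvPolynomial (Fin n) K) (s t : Set (Fin n)) (hst : s ⊆ t)
    (hp : p ∈ supported K s) : p ∈ supported K t :=
  supported_mono hst hp

theorem triSet_stable {K : Type*} [Field K] {n : ℕ}
    {D : Derivation K (MvPolynomial (Fin n) K) (MvPolynomial (Fin n) K)}
    (hD : D ∈ triSet K n) (i : Fin n) :
    ∀ j ∈ {j' : Fin n | (j' : ℕ) < (i : ℕ)},
      D (X j) ∈ supported K {j' : Fin n | (j' : ℕ) < (i : ℕ)} := by
  intro j hj
  refine supported_upward _ {j' : Fin n | (j' : ℕ) < (j : ℕ)} _ ?_ (hD j)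
  intro l hl
  have hl' : (l : ℕ) < (j : ℕ) := hl
  have hj' : (j : ℕ) < (i : ℕ) := hj
  exact lt_trans hl' hj'

theorem triSet_lie {K : Type*} [Field K] {n : ℕ}
    {a b : Derivation K (MvPolynomial (Fin n) K) (MvPolynomial (Fin n) K)}
    (ha : a ∈ triSet K n) (hb : b ∈ triSet K n) : ⁅a, b⁆ ∈ triSet K n := by
  intro i
  rw [Derivation.commutator_apply]
  exact sub_mem
    (Derivation.mem_supported_of_forall_mem _ a (triSet_stable ha i) (hb i))
    (Derivation.mem_supported_of_forall_mem _ b (triSet_stable hb i) (ha i))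

/-- The Lie algebra `u_n = K∂₁ ⊕ P₁∂₂ ⊕ ⋯ ⊕ P_{n-1}∂ₙ` of triangular polynomial
derivations, as a Lie subalgebra of the Lie algebra of all `K`-derivations of the
polynomial algebra `P_n = K[x₁,…,xₙ]`. -/
def triangular (K : Type*) [Field K] (n : ℕ) :
    LieSubalgebra K (Derivation K (MvPolynomial (Fin n) K) (MvPolynomial (Fin n) K)) where
  carrier := triSet K n
  add_mem' := fun {a b} ha hb i => by
    rw [Derivation.add_apply]; exact add_mem (ha i) (hb i)
  zero_mem' := fun i => by
    rw [Derivation.zero_apply]; exact zero_mem _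
  smul_mem' := fun c a ha i => by
    rw [Derivation.smul_apply]; exact Subalgebra.smul_mem _ (ha i) c
  lie_mem' := fun {a b} ha hb => triSet_lie ha hb

theorem mem_triangular_iff {K : Type*} [Field K] {n : ℕ}
    (D : Derivation K (MvPolynomial (Fin n) K) (MvPolynomial (Fin n) K)) :
    D ∈ triangular K n ↔
      ∀ i : Fin n, D (X i) ∈ supported K {j : Fin n | (j : ℕ) < (i : ℕ)} := Iff.rfl

/-- The partial derivative `∂ᵢ` as an element of the Lie algebra `u_n`. -/
def pd (K : Type*) [Field K] (n : ℕ) (i : Fin n) : ↥(triangular K n) :=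
  ⟨pderiv i, by
    intro j
    rcases eq_or_ne j i with rfl | h
    · rw [pderiv_X_self]
      exact one_mem _
    · rw [pderiv_X_of_ne h]
      exact zero_mem _⟩

/-- The subspace `u_{n,k+1} = ⊕_{j ≥ k+1} P_{j-1}∂_j` of `u_n` (1-based indexing as in the
paper): the triangular derivations whose coefficients at `∂₁, …, ∂_k` vanish, i.e.
(zero-based) `D (X j) = 0` for all `j < k`. -/
def lowIdeal (K : Type*) [Field K] (n k : ℕ) : Submodule K ↥(triangular K n) where
  carrier := {a | ∀ j : Fin n, (j : ℕ) < k → a.val (X j) = 0}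
  add_mem' := by
    intro a b ha hb j hj
    have hab : (a + b : ↥(triangular K n)).val = a.val + b.val := rfl
    rw [hab, Derivation.add_apply, ha j hj, hb j hj, add_zero]
  zero_mem' := by
    intro j hj
    have h0 : (0 : ↥(triangular K n)).val = 0 := rfl
    rw [h0, Derivation.zero_apply]
  smul_mem' := by
    intro c a ha j hj
    have hca : (c • a : ↥(triangular K n)).val = c • a.val := rfl
    rw [hca, Derivation.smul_apply, ha j hj, smul_zero]


theorem coeff_pderiv_aux {K : Type*} [CommSemiring K] {σ : Type*} [DecidableEq σ]
    (i : σ) (m : σ →₀ ℕ) (p : MvPolynomial σ K) :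
    coeff m (pderiv i p) = ((m i + 1 : ℕ) : K) * coeff (m + Finsupp.single i 1) p := by
  induction p using MvPolynomial.induction_on' with
  | monomial s a =>
    rw [pderiv_monomial, coeff_monomial, coeff_monomial]
    by_cases h : s = m + Finsupp.single i 1
    · subst h
      have h1 : m + Finsupp.single i 1 - Finsupp.single i 1 = m :=
        add_tsub_cancel_right (α := _root_.Finsupp _ ℕ) m (Finsupp.single i 1)
      have h2 : (m + Finsupp.single i 1 : _root_.Finsupp _ ℕ) i = m i + 1 := by
        rw [Finsupp.add_apply, Finsupp.single_eq_same]
      rw [if_pos h1, h2]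
      push_cast
      simp only [if_true]
      ring
    · rw [if_neg h]
      by_cases h' : s - Finsupp.single i 1 = m
      · rw [if_pos h']
        have hsi : s i = 0 := by
          by_contra hsi
          apply h
          ext j
          have hj' := DFunLike.congr_fun h' j
          rw [Finsupp.tsub_apply] at hj'
          by_cases hj : j = i
          · subst hj
            rw [Finsupp.single_eq_same] at hj'
            rw [Finsupp.add_apply, Finsupp.single_eq_same]
            omega
          · simp only [Finsupp.single_apply, if_neg (Ne.symm hj)] at hj'
            simp only [Finsupp.add_apply, Finsupp.single_apply, if_neg (Ne.symm hj)]
            omega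
        rw [hsi]
        simp
      · rw [if_neg h', mul_zero]
  | add p q hp hq =>
    rw [map_add, coeff_add, coeff_add, hp, hq, mul_add]

theorem eq_C_of_pderiv_eq_zero {K : Type*} [Field K] [CharZero K] {σ : Type*} [DecidableEq σ]
    (p : MvPolynomial σ K) (h : ∀ i, pderiv i p = 0) : p = C (coeff 0 p) := by
  ext m
  rw [coeff_C]
  by_cases hm : (0 : σ →₀ ℕ) = m
  · rw [if_pos hm, ← hm]
  · rw [if_neg hm]
    have hm' : m ≠ 0 := fun hc => hm hc.symm
    obtain ⟨i, hi⟩ := Finsupp.ne_iff.mp hm'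
    simp only [Finsupp.coe_zero, Pi.zero_apply] at hi
    have hle : Finsupp.single i 1 ≤ m := by
      rw [Finsupp.single_le_iff]
      omega
    have key := coeff_pderiv_aux i (m - Finsupp.single i 1) p
    rw [h i, tsub_add_cancel_of_le hle] at key
    simp only [coeff_zero] at key
    exact (mul_eq_zero.mp key.symm).resolve_left (Nat.cast_ne_zero.mpr (Nat.succ_ne_zero _))


section MainHelpers

variable {K : Type*} [Field K] [CharZero K] {n : ℕ}

theorem tri_bracket_eq_zero_iff (a b : ↥(triangular K n)) :
    ⁅a, b⁆ = (0 : ↥(triangular K n)) ↔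
      ∀ i : Fin n, a.val (b.val (X i)) = b.val (a.val (X i)) := by
  rw [← Subtype.coe_inj]
  have hco : (↑⁅a, b⁆ : Derivation K (MvPolynomial (Fin n) K) (MvPolynomial (Fin n) K))
      = ⁅a.val, b.val⁆ := rfl
  rw [hco]
  constructor
  · intro h i
    have := DFunLike.congr_fun h (X i)
    rw [Derivation.commutator_apply] at this
    have h0 : ((0 : ↥(triangular K n)) : Derivation K (MvPolynomial (Fin n) K)
        (MvPolynomial (Fin n) K)) (X i) = 0 := rfl
    rw [h0] at this
    exact sub_eq_zero.mp this
  · intro h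
    apply MvPolynomial.derivation_ext
    intro i
    rw [show ((0 : ↥(triangular K n)) : Derivation K (MvPolynomial (Fin n) K)
      (MvPolynomial (Fin n) K)) (X i) = 0 from rfl,
      Derivation.commutator_apply, sub_eq_zero]
    exact h i

theorem deriv_C_zero (D : Derivation K (MvPolynomial (Fin n) K) (MvPolynomial (Fin n) K))
    (c : K) : D (C c) = 0 := by
  rw [← MvPolynomial.algebraMap_eq]
  exact D.map_algebraMap c

theorem span_pd_const {a : ↥(triangular K n)}
    (ha : a ∈ Submodule.span K (Set.range (pd K n))) (i : Fin n) :
    ∃ c : K, a.val (X i) = C c := by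
  induction ha using Submodule.span_induction with
  | mem x hx =>
    obtain ⟨j, rfl⟩ := hx
    rcases eq_or_ne i j with rfl | hne
    · exact ⟨1, by rw [show (pd K n i).val (X i) = pderiv i (X i) from rfl,
        pderiv_X_self, map_one]⟩
    · exact ⟨0, by rw [show (pd K n j).val (X i) = pderiv j (X i) from rfl,
        pderiv_X_of_ne hne, map_zero]⟩
  | zero => exact ⟨0, by rw [show ((0 : ↥(triangular K n))).val = 0 from rfl,
      Derivation.zero_apply, map_zero]⟩
  | add x y hx hy ihx ihy =>
    obtain ⟨c, hc⟩ := ihx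
    obtain ⟨c', hc'⟩ := ihy
    exact ⟨c + c', by rw [show ((x + y : ↥(triangular K n))).val = x.val + y.val from rfl,
      Derivation.add_apply, hc, hc', map_add]⟩
  | smul k x hx ihx =>
    obtain ⟨c, hc⟩ := ihx
    refine ⟨k * c, ?_⟩
    rw [show ((k • x : ↥(triangular K n))).val = k • x.val from rfl,
      Derivation.smul_apply, hc, map_mul]
    rw [smul_eq_C_mul]

theorem tri_coe_add (x y : ↥(triangular K n)) : (x + y).val = x.val + y.val := rfl

theorem tri_val_sum {ι : Type*} (s : Finset ι) (f : ι → ↥(triangular K n))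
    (p : MvPolynomial (Fin n) K) :
    (∑ i ∈ s, f i).val p = ∑ i ∈ s, (f i).val p := by
  classical
  induction s using Finset.induction_on with
  | empty =>
    rw [Finset.sum_empty, Finset.sum_empty,
      show ((0 : ↥(triangular K n))).val = 0 from rfl, Derivation.zero_apply]
  | insert _ _ hni ih =>
    rw [Finset.sum_insert hni, Finset.sum_insert hni, ← ih, tri_coe_add,
      Derivation.add_apply]

theorem mem_span_pd_of_const {a : ↥(triangular K n)}
    (h : ∀ i : Fin n, ∃ c : K, a.val (X i) = C c) :
    a ∈ Submodule.span K (Set.range (pd K n)) := by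
  choose c hc using h
  have key : a = ∑ i : Fin n, c i • pd K n i := by
    apply Subtype.ext
    apply MvPolynomial.derivation_ext
    intro j
    rw [hc j]
    have : (∑ i : Fin n, c i • pd K n i).val (X j) = ∑ i : Fin n, c i • pderiv i (X j) := by
      rw [tri_val_sum]
      exact Finset.sum_congr rfl fun i _ => by
        rw [show ((c i • pd K n i : ↥(triangular K n))).val = c i • (pd K n i).val from rfl,
          Derivation.smul_apply]
        rfl
    rw [this, Finset.sum_eq_single j
      (fun i _ hij => by rw [pderiv_X_of_ne (Ne.symm hij), smul_zero])
      (fun hj => absurd (Finset.mem_univ j) hj)]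
    rw [pderiv_X_self, smul_eq_C_mul, mul_one]
  rw [key]
  exact Submodule.sum_mem _ fun i _ =>
    Submodule.smul_mem _ _ (Submodule.subset_span ⟨i, rfl⟩)

theorem mem_lowIdeal_iff (a : ↥(triangular K n)) (k : ℕ) :
    a ∈ lowIdeal K n k ↔ ∀ j : Fin n, (j : ℕ) < k → a.val (X j) = 0 := Iff.rfl

theorem low_ann {a : ↥(triangular K n)} (ha : a ∈ lowIdeal K n (n - 1))
    {p : MvPolynomial (Fin n) K}
    (hp : p ∈ supported K {j : Fin n | (j : ℕ) < n - 1}) : a.val p = 0 :=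
  Derivation.eq_zero_of_forall_eq_zero _ _ (fun j hj => ha j hj) hp

theorem low_abelian {a b : ↥(triangular K n)} (ha : a ∈ lowIdeal K n (n - 1))
    (hb : b ∈ lowIdeal K n (n - 1)) : ⁅a, b⁆ = (0 : ↥(triangular K n)) := by
  rw [tri_bracket_eq_zero_iff]
  intro i
  rcases lt_or_ge (i : ℕ) (n - 1) with hi | hi
  · rw [ha i hi, hb i hi, map_zero, map_zero]
  · have hi' : (i : ℕ) = n - 1 := by omega
    have hpa : a.val (X i) ∈ supported K {j : Fin n | (j : ℕ) < n - 1} := by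
      have := a.property i
      rwa [hi'] at this
    have hpb : b.val (X i) ∈ supported K {j : Fin n | (j : ℕ) < n - 1} := by
      have := b.property i
      rwa [hi'] at this
    rw [low_ann ha hpb, low_ann hb hpa]

end MainHelpers

set_option maxHeartbeats 1000000 in
/-- For `n ≥ 2`:
(1) the subspace `D_n = K∂₁ ⊕ ⋯ ⊕ K∂ₙ` (the span of the partial derivatives) is its own
centralizer in `u_n`, hence is a maximal abelian Lie subalgebra of `u_n`;
(2) the ideal `P_{n-1}∂ₙ` is its own centralizer in `u_n`, hence is a maximal abelian
Lie subalgebra of `u_n`. -/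
theorem triangular_centralizers
    (K : Type*) [Field K] [CharZero K] (n : ℕ) (hn : 2 ≤ n) :
    ((∀ a : ↥(triangular K n),
        (∀ b ∈ Submodule.span K (Set.range (pd K n)), ⁅a, b⁆ = 0) ↔
          a ∈ Submodule.span K (Set.range (pd K n))) ∧
      (∀ a ∈ Submodule.span K (Set.range (pd K n)),
        ∀ b ∈ Submodule.span K (Set.range (pd K n)),
          ⁅a, b⁆ = (0 : ↥(triangular K n))) ∧
      (∀ A : Submodule K ↥(triangular K n),
        Submodule.span K (Set.range (pd K n)) ≤ A →
        (∀ a ∈ A, ∀ b ∈ A, ⁅a, b⁆ = (0 : ↥(triangular K n))) →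
        A = Submodule.span K (Set.range (pd K n)))) ∧
    ((∀ a : ↥(triangular K n),
        (∀ b ∈ lowIdeal K n (n - 1), ⁅a, b⁆ = 0) ↔ a ∈ lowIdeal K n (n - 1)) ∧
      (∀ a ∈ lowIdeal K n (n - 1), ∀ b ∈ lowIdeal K n (n - 1),
        ⁅a, b⁆ = (0 : ↥(triangular K n))) ∧
      (∀ A : Submodule K ↥(triangular K n), lowIdeal K n (n - 1) ≤ A →
        (∀ a ∈ A, ∀ b ∈ A, ⁅a, b⁆ = (0 : ↥(triangular K n))) →
        A = lowIdeal K n (n - 1))) := by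
  have hnpos : 0 < n := by omega
  set last : Fin n := ⟨n - 1, by omega⟩ with hlast
  -- centralizer result for part 1
  have cen1 : ∀ a : ↥(triangular K n),
      (∀ b ∈ Submodule.span K (Set.range (pd K n)), ⁅a, b⁆ = 0) ↔
        a ∈ Submodule.span K (Set.range (pd K n)) := by
    intro a
    constructor
    · intro h
      apply mem_span_pd_of_const
      intro j
      refine ⟨coeff 0 (a.val (X j)), ?_⟩
      apply eq_C_of_pderiv_eq_zero
      intro i
      have hb := (tri_bracket_eq_zero_iff a (pd K n i)).mp
        (h (pd K n i) (Submodule.subset_span ⟨i, rfl⟩)) j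
      have hpdv : (pd K n i).val = pderiv i := rfl
      rw [hpdv] at hb
      rcases eq_or_ne j i with rfl | hne
      · rw [pderiv_X_self, Derivation.map_one_eq_zero] at hb
        exact hb.symm
      · rw [pderiv_X_of_ne hne, map_zero] at hb
        exact hb.symm
    · intro ha b hb
      rw [tri_bracket_eq_zero_iff]
      intro i
      obtain ⟨c, hc⟩ := span_pd_const hb i
      obtain ⟨c', hc'⟩ := span_pd_const ha i
      rw [hc, hc', deriv_C_zero, deriv_C_zero]
  have ab1 : ∀ a ∈ Submodule.span K (Set.range (pd K n)),
      ∀ b ∈ Submodule.span K (Set.range (pd K n)),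
        ⁅a, b⁆ = (0 : ↥(triangular K n)) := by
    intro a ha b hb
    exact (cen1 a).mpr ha b hb
  -- centralizer result for part 2
  have cen2 : ∀ a : ↥(triangular K n),
      (∀ b ∈ lowIdeal K n (n - 1), ⁅a, b⁆ = 0) ↔ a ∈ lowIdeal K n (n - 1) := by
    intro a
    constructor
    · intro h
      intro j0 hj0
      -- the derivation X j0 • ∂_last
      set d : Derivation K (MvPolynomial (Fin n) K) (MvPolynomial (Fin n) K) :=
        (X j0 : MvPolynomial (Fin n) K) • pderiv last with hd
      have hlastval : (last : ℕ) = n - 1 := rfl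
      have hdX : ∀ i : Fin n, d (X i) =
          (X j0 : MvPolynomial (Fin n) K) * pderiv last (X i) := fun i => by
        rw [hd, Derivation.smul_apply, smul_eq_mul]
      have hd_tri : d ∈ triangular K n := by
        intro i
        rw [hdX i]
        rcases eq_or_ne i last with rfl | hne
        · rw [pderiv_X_self, mul_one]
          exact (X_mem_supported (R := K)).mpr (by
            show (j0 : ℕ) < (last : ℕ)
            omega)
        · rw [pderiv_X_of_ne hne, mul_zero]
          exact zero_mem _
      set b : ↥(triangular K n) := ⟨d, hd_tri⟩ with hb
      have hb_low : b ∈ lowIdeal K n (n - 1) := by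
        intro j hj
        have hjne : j ≠ last := by
          intro hc
          rw [hc] at hj
          omega
        show d (X j) = 0
        rw [hdX j, pderiv_X_of_ne hjne, mul_zero]
      have hcomm := (tri_bracket_eq_zero_iff a b).mp (h b hb_low) last
      have hbv : b.val = d := rfl
      rw [hbv] at hcomm
      have h1 : d (X last) = X j0 := by
        rw [hdX last, pderiv_X_self, mul_one]
      have h2 : d (a.val (X last)) = 0 := by
        have hpz : pderiv last (a.val (X last)) = 0 := by
          apply Derivation.eq_zero_of_forall_eq_zero
            {j : Fin n | (j : ℕ) < (last : ℕ)}
          · intro j hj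
            have hj' : (j : ℕ) < (last : ℕ) := hj
            exact pderiv_X_of_ne (by
              intro hc
              rw [hc] at hj'
              omega)
          · exact a.property last
        rw [hd, Derivation.smul_apply, hpz, smul_zero]
      rw [h1, h2] at hcomm
      exact hcomm
    · intro ha b hb
      exact low_abelian ha hb
  have ab2 : ∀ a ∈ lowIdeal K n (n - 1), ∀ b ∈ lowIdeal K n (n - 1),
      ⁅a, b⁆ = (0 : ↥(triangular K n)) := fun a ha b hb => low_abelian ha hb
  refine ⟨⟨cen1, ab1, ?_⟩, ⟨cen2, ab2, ?_⟩⟩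
  · intro A hle hab
    apply le_antisymm _ hle
    intro a haA
    exact (cen1 a).mp fun b hb => hab a haA b (hle hb)
  · intro A hle hab
    apply le_antisymm _ hle
    intro a haA
    exact (cen2 a).mp fun b hb => hab a haA b (hle hb)
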